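/- Let r be a positive integer. Let Λ := ExteriorAlgebra ℝ (Fin r → ℝ), let e_α denote the image under the canonical inclusion of the α-th standard basis vector, and set etop := e_0 * e_1 * ⋯ * e_{r−1}. Equip Λ ⊗[ℝ] Λ with the tensor-product algebra structure, in which (a ⊗ b)·(c ⊗ d) = (a·c) ⊗ (b·d) (the algebra of double forms). For T ∈ Matrix (Fin r) (Fin r) ℝ define ω_T := Σ_{α, i ∈ Fin r} (T α i) • (e_α ⊗ e_i) ∈ Λ ⊗ Λ. Then ω_T^r = (r! · det T) • (etop ⊗ etop). -/

import Mathlib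

open scoped TensorProduct

set_option linter.unusedSectionVars false

section helpers

variable {A : Type*} [Ring A] [Algebra ℝ A]

lemma aux_listProd_smul : ∀ {n : ℕ} (c : Fin n → ℝ) (y : Fin n → A),
    (List.ofFn fun k => c k • y k).prod = (∏ k, c k) • (List.ofFn y).prod := by
  intro n
  induction n with
  | zero => intro c y; simp
  | succ n ih =>
    intro c y
    rw [List.ofFn_succ, List.ofFn_succ, List.prod_cons, List.prod_cons,
      ih (fun i => c i.succ) (fun i => y i.succ), Fin.prod_univ_succ,
      smul_mul_smul_comm]

lemma aux_sum_pow {ι : Type*} [Fintype ι] (g : ι → A) (n : ℕ) :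
    (∑ i, g i) ^ n = ∑ f : Fin n → ι, (List.ofFn fun k => g (f k)).prod := by
  induction n with
  | zero => simp
  | succ n ih =>
    have step : ∑ f : Fin (n+1) → ι, (List.ofFn fun k => g (f k)).prod
        = ∑ p : ι × (Fin n → ι),
            (List.ofFn fun k => g (Fin.snocEquiv (fun _ => ι) p k)).prod :=
      (Fintype.sum_equiv (Fin.snocEquiv fun _ => ι) _ _ (fun p => rfl)).symm
    rw [pow_succ, ih, Finset.sum_mul_sum, step, Fintype.sum_prod_type, Finset.sum_comm]
    refine Finset.sum_congr rfl fun f _ => Finset.sum_congr rfl fun x _ => ?_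
    rw [List.ofFn_succ']
    simp [Fin.snocEquiv, Fin.init]

lemma aux_listProd_tmul {B C : Type*} [Ring B] [Ring C] [Algebra ℝ B] [Algebra ℝ C] :
    ∀ {n : ℕ} (a : Fin n → B) (b : Fin n → C),
    (List.ofFn fun k => a k ⊗ₜ[ℝ] b k).prod
      = (List.ofFn a).prod ⊗ₜ[ℝ] (List.ofFn b).prod := by
  intro n
  induction n with
  | zero => intro a b; simp [Algebra.TensorProduct.one_def]
  | succ n ih =>
    intro a b
    rw [List.ofFn_succ, List.ofFn_succ, List.ofFn_succ, List.prod_cons, List.prod_cons,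
      List.prod_cons, ih (fun i => a i.succ) (fun i => b i.succ),
      Algebra.TensorProduct.tmul_mul_tmul]

lemma aux_sum_perm {r : ℕ} {M : Type*} [AddCommMonoid M] (h : (Fin r → Fin r) → M)
    (h0 : ∀ f, ¬ Function.Injective f → h f = 0) :
    ∑ f : Fin r → Fin r, h f = ∑ σ : Equiv.Perm (Fin r), h ⇑σ := by
  classical
  rw [← Finset.sum_filter_of_ne (p := fun f => Function.Bijective f)
    (fun f _ hf => by
      by_contra hb
      exact hf (h0 f (fun hi => hb (Finite.injective_iff_bijective.mp hi))))]
  refine (Finset.sum_bij (fun (σ : Equiv.Perm (Fin r)) _ => ⇑σ) ?_ ?_ ?_ ?_).symm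
  · intro σ _
    exact Finset.mem_filter.mpr ⟨Finset.mem_univ _, σ.bijective⟩
  · intro σ _ τ _ hστ
    exact Equiv.coe_fn_injective hστ
  · intro f hf
    simp only [Finset.mem_filter] at hf
    exact ⟨Equiv.ofBijective f hf.2, Finset.mem_univ _, rfl⟩
  · intro σ _; rfl

lemma aux_scalar (r : ℕ) (T : Matrix (Fin r) (Fin r) ℝ) :
    ∑ σ : Equiv.Perm (Fin r), ∑ τ : Equiv.Perm (Fin r),
      (((Equiv.Perm.sign σ : ℤ) : ℝ) * ((Equiv.Perm.sign τ : ℤ) : ℝ) * ∏ k, T (σ k) (τ k))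
    = (r.factorial : ℝ) * T.det := by
  rw [Finset.sum_comm]
  have inner : ∀ τ : Equiv.Perm (Fin r),
      ∑ σ : Equiv.Perm (Fin r),
        (((Equiv.Perm.sign σ : ℤ) : ℝ) * ((Equiv.Perm.sign τ : ℤ) : ℝ) * ∏ k, T (σ k) (τ k))
      = T.det := by
    intro τ
    have hs : ((Equiv.Perm.sign τ : ℤ) : ℝ) * ((Equiv.Perm.sign τ : ℤ) : ℝ) = 1 := by
      rcases Int.units_eq_one_or (Equiv.Perm.sign τ) with h | h <;> simp [h]
    rw [← Equiv.sum_comp (Equiv.mulRight τ)]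
    rw [Matrix.det_apply']
    refine Finset.sum_congr rfl fun π _ => ?_
    have h1 : ∀ k, ((Equiv.mulRight τ) π) k = π (τ k) := fun k => rfl
    have h2 : ∏ k, T (π (τ k)) (τ k) = ∏ j, T (π j) j := Equiv.prod_comp τ fun j => T (π j) j
    simp only [Equiv.coe_mulRight, map_mul, Units.val_mul, Int.cast_mul,
      Equiv.Perm.coe_mul, Function.comp_apply]
    rw [h2, mul_assoc (((Equiv.Perm.sign π : ℤ) : ℝ)), hs, mul_one]
  rw [Finset.sum_congr rfl fun τ _ => inner τ, Finset.sum_const, Finset.card_univ,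
    Fintype.card_perm, Fintype.card_fin, nsmul_eq_mul]

end helpers

/-- In the algebra of double forms `Λ ⊗[ℝ] Λ`, where
`Λ = ExteriorAlgebra ℝ (Fin r → ℝ)` and the product is componentwise
(`(a ⊗ b)(c ⊗ d) = (a*c) ⊗ (b*d)`), the `(1,1)`-double form
`ω_T = ∑_{α,i} T α i • (e α ⊗ e i)` associated to an `r × r` real matrix `T` satisfies
`ω_T ^ r = (r! ⬝ det T) • (etop ⊗ etop)`. -/
theorem stochasticGBC.doubleForm_pow_eq_det_smul
    (r : ℕ) (hr : 0 < r) (T : Matrix (Fin r) (Fin r) ℝ) :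
    let e : Fin r → ExteriorAlgebra ℝ (Fin r → ℝ) :=
      fun α => ExteriorAlgebra.ι ℝ (Pi.single α 1)
    let etop : ExteriorAlgebra ℝ (Fin r → ℝ) := ((List.finRange r).map e).prod
    let ω : ExteriorAlgebra ℝ (Fin r → ℝ) ⊗[ℝ] ExteriorAlgebra ℝ (Fin r → ℝ) :=
      ∑ α : Fin r, ∑ i : Fin r, T α i • (e α ⊗ₜ[ℝ] e i)
    ω ^ r = ((r.factorial : ℝ) * T.det) • (etop ⊗ₜ[ℝ] etop) := by
  intro e etop ω
  classical
  set v : Fin r → (Fin r → ℝ) := fun i => Pi.single i 1 with hv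
  -- P f = ordered product of e ∘ f, as an alternating map value
  set P : (Fin r → Fin r) → ExteriorAlgebra ℝ (Fin r → ℝ) :=
    fun f => (List.ofFn fun k => e (f k)).prod with hPdef
  have hP : ∀ f : Fin r → Fin r, P f = ExteriorAlgebra.ιMulti ℝ r (v ∘ f) := by
    intro f
    rw [ExteriorAlgebra.ιMulti_apply]
    rfl
  have hetop : etop = ExteriorAlgebra.ιMulti ℝ r v := by
    rw [ExteriorAlgebra.ιMulti_apply, List.ofFn_eq_map]
  have hPzero : ∀ f : Fin r → Fin r, ¬ Function.Injective f → P f = 0 := by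
    intro f hf
    rw [Function.not_injective_iff] at hf
    obtain ⟨i, j, hij, hne⟩ := hf
    rw [hP]
    exact AlternatingMap.map_eq_zero_of_eq _ _ (by simp [Function.comp, hij]) hne
  have hPperm : ∀ σ : Equiv.Perm (Fin r),
      P ⇑σ = ((Equiv.Perm.sign σ : ℤ) : ℝ) • etop := by
    intro σ
    have h := (ExteriorAlgebra.ιMulti ℝ r).map_perm v σ
    rw [hP, hetop, h, Units.smul_def, Int.cast_smul_eq_zsmul ℝ]
  -- expand ω as a single sum over pairs
  have hω : ω = ∑ p : Fin r × Fin r, T p.1 p.2 • (e p.1 ⊗ₜ[ℝ] e p.2) := by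
    rw [Fintype.sum_prod_type]
  rw [hω, aux_sum_pow]
  have step1 : ∀ F : Fin r → Fin r × Fin r,
      (List.ofFn fun k => T (F k).1 (F k).2 • (e (F k).1 ⊗ₜ[ℝ] e (F k).2)).prod
      = (∏ k, T (F k).1 (F k).2) • (P (fun k => (F k).1) ⊗ₜ[ℝ] P (fun k => (F k).2)) := by
    intro F
    rw [aux_listProd_smul (fun k => T (F k).1 (F k).2)
      (fun k => e (F k).1 ⊗ₜ[ℝ] e (F k).2),
      aux_listProd_tmul (fun k => e (F k).1) (fun k => e (F k).2)]
  simp only [step1]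
  -- reindex over pairs of functions
  have step2 : ∑ F : Fin r → Fin r × Fin r,
      (∏ k, T (F k).1 (F k).2) • (P (fun k => (F k).1) ⊗ₜ[ℝ] P (fun k => (F k).2))
      = ∑ f : Fin r → Fin r, ∑ g : Fin r → Fin r,
          (∏ k, T (f k) (g k)) • (P f ⊗ₜ[ℝ] P g) := by
    exact (Fintype.sum_equiv (Equiv.arrowProdEquivProdArrow (Fin r) (fun _ => Fin r) (fun _ => Fin r))
      _ (fun p => (∏ k, T (p.1 k) (p.2 k)) • (P p.1 ⊗ₜ[ℝ] P p.2)) (fun F => rfl)).trans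
      (Fintype.sum_prod_type _)
  rw [step2]
  -- restrict to permutations
  rw [aux_sum_perm _ (fun f hf => by simp [hPzero f hf])]
  rw [Finset.sum_congr rfl (fun (σ : Equiv.Perm (Fin r)) _ =>
    aux_sum_perm (fun g => (∏ k, T (σ k) (g k)) • (P ⇑σ ⊗ₜ[ℝ] P g))
      (fun g hg => by simp [hPzero g hg]))]
  -- evaluate each term
  have step3 : ∀ σ τ : Equiv.Perm (Fin r),
      (∏ k, T (σ k) (τ k)) • (P ⇑σ ⊗ₜ[ℝ] P ⇑τ)
      = (((Equiv.Perm.sign σ : ℤ) : ℝ) * ((Equiv.Perm.sign τ : ℤ) : ℝ)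
          * ∏ k, T (σ k) (τ k)) • (etop ⊗ₜ[ℝ] etop) := by
    intro σ τ
    rw [hPperm σ, hPperm τ, TensorProduct.tmul_smul, ← TensorProduct.smul_tmul',
      smul_smul, smul_smul]
    congr 1
    ring
  simp only [step3]
  have pull : ∀ σ : Equiv.Perm (Fin r),
      ∑ τ : Equiv.Perm (Fin r),
        (((Equiv.Perm.sign σ : ℤ) : ℝ) * ((Equiv.Perm.sign τ : ℤ) : ℝ)
          * ∏ k, T (σ k) (τ k)) • (etop ⊗ₜ[ℝ] etop)
      = (∑ τ : Equiv.Perm (Fin r),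
          ((Equiv.Perm.sign σ : ℤ) : ℝ) * ((Equiv.Perm.sign τ : ℤ) : ℝ)
            * ∏ k, T (σ k) (τ k)) • (etop ⊗ₜ[ℝ] etop) :=
    fun σ => (Finset.sum_smul).symm
  simp only [pull]
  rw [← Finset.sum_smul, aux_scalar r T]
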